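/- arXiv:0908.1781 — 2 statements merged into one kernel-verified Lean document; each statement's English description precedes it below -/
import Mathlib

section
/- Let k ∈ ℕ and ν ∈ ℝ. There exist constants c₁, c₂ > 0 (depending only on k, ν) such that for every smooth function f : ℝ³∖{0} → ℝ one has c₁ · Σ_{j=0}^{k} sup_{x≠0} ‖x‖^{ν+j} ‖D^j f(x)‖ ≤ ‖f‖_{k,0,ν} ≤ c₂ · Σ_{j=0}^{k} sup_{x≠0} ‖x‖^{ν+j} ‖D^j f(x)‖, where the inequalities are understood in [0,∞] (in particular one side is finite if and only if the other is). -/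
open scoped ENNReal
open Metric Set

noncomputable section

/-- Euclidean 3-space. -/
abbrev E3 : Type := EuclideanSpace ℝ (Fin 3)

/-- The chart `ℋ_P : B₁ → ℝ³ ∖ {0}`, `ℋ_P(x) = P + (‖P‖/2)·x`. -/
def chartH (P x : E3) : E3 := P + (‖P‖ / 2) • x

/-- The Hölder norm `‖g‖_{C^{k,α}(B)}` (valued in `[0,∞]`), with the Hölder
seminorm term omitted when `α = 0`. -/
def holderNormOn {F : Type*} [NormedAddCommGroup F] [NormedSpace ℝ F]
    (k : ℕ) (α : ℝ) (B : Set E3) (g : E3 → F) : ℝ≥0∞ :=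
  (∑ j ∈ Finset.range (k + 1), ⨆ x ∈ B, (‖iteratedFDeriv ℝ j g x‖₊ : ℝ≥0∞)) +
  (if α = 0 then 0 else
    ⨆ x ∈ B, ⨆ y ∈ B, ⨆ _ : x ≠ y,
      ENNReal.ofReal (‖iteratedFDeriv ℝ k g x - iteratedFDeriv ℝ k g y‖ / ‖x - y‖ ^ α))

/-- The weighted Hölder norm `‖T‖_{k,α,ν}` on `ℝ³ ∖ {0}`, defined via the charts
`ℋ_P` on the full unit ball `B₁`. -/
def weightedNorm {F : Type*} [NormedAddCommGroup F] [NormedSpace ℝ F]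
    (k : ℕ) (α ν : ℝ) (T : E3 → F) : ℝ≥0∞ :=
  ⨆ P : {P : E3 // P ≠ 0},
    holderNormOn k α (ball 0 1) (fun x => ‖chartH (↑P) x‖ ^ ν • T (chartH (↑P) x))

/-- The primed weighted Hölder norm `‖T‖'_{k,α,ν}`, defined via the restrictions
of the charts `ℋ_P` to the ball `B_{1/2}`. -/
def weightedNorm' {F : Type*} [NormedAddCommGroup F] [NormedSpace ℝ F]
    (k : ℕ) (α ν : ℝ) (T : E3 → F) : ℝ≥0∞ :=
  ⨆ P : {P : E3 // P ≠ 0},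
    holderNormOn k α (ball 0 (1/2)) (fun x => ‖chartH (↑P) x‖ ^ ν • T (chartH (↑P) x))

/-- Partial derivative `∂_a g` in the direction of the `a`-th coordinate vector. -/
def pd (a : Fin 3) (g : E3 → ℝ) : E3 → ℝ :=
  fun x => fderiv ℝ g x (EuclideanSpace.single a 1)

/-- The Euclidean Laplacian `Δ f = Σ_a ∂_a ∂_a f`. -/
def lap (f : E3 → ℝ) : E3 → ℝ := fun x => ∑ a : Fin 3, pd a (pd a f) x

/-- The Euclidean conformal Killing operator
`(𝒟X)_{ab} = ½(∂_a X_b + ∂_b X_a) − (1/3)δ_{ab} Σ_c ∂_c X_c`. -/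
def cko (X : E3 → E3) (a b : Fin 3) : E3 → ℝ := fun x =>
  (pd a (fun y => X y b) x + pd b (fun y => X y a) x) / 2 -
    (if a = b then (1 : ℝ) else 0) / 3 * ∑ c : Fin 3, pd c (fun y => X y c) x

/-- The Euclidean vector Laplacian `(L X)_a = −Σ_b ∂_b (𝒟X)_{ab}`. -/
def vecLap (X : E3 → E3) : E3 → E3 := fun x =>
  (EuclideanSpace.equiv (Fin 3) ℝ).symm fun a => -∑ b : Fin 3, pd b (cko X a b) x

theorem fderiv_comp_add_left'' {F : Type*} [NormedAddCommGroup F] [NormedSpace ℝ F]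
    (f : E3 → F) (a x : E3) :
    fderiv ℝ (fun z => f (a + z)) x = fderiv ℝ f (a + x) := by
  by_cases h : DifferentiableAt ℝ f (a + x)
  · have h1 : HasFDerivAt (fun z : E3 => a + z) (ContinuousLinearMap.id ℝ E3) x := by
      simpa using (hasFDerivAt_id x).const_add a
    have := (h.hasFDerivAt.comp x h1).fderiv
    exact this
  · have h2 : ¬ DifferentiableAt ℝ (fun z => f (a + z)) x := by
      intro hc
      have hc' : DifferentiableAt ℝ (fun z => f (a + z)) (-a + (a + x)) := by
        rw [neg_add_cancel_left]; exact hc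
      have : DifferentiableAt ℝ ((fun z => f (a + z)) ∘ (fun z : E3 => -a + z)) (a + x) :=
        DifferentiableAt.comp _ hc' ((differentiable_id.const_add (-a)) (a + x))
      simp only [Function.comp_def, add_neg_cancel_left] at this
      exact h this
    rw [fderiv_zero_of_not_differentiableAt h, fderiv_zero_of_not_differentiableAt h2]

theorem iteratedFDeriv_comp_add_left'' {F : Type*} [NormedAddCommGroup F] [NormedSpace ℝ F]
    (n : ℕ) (f : E3 → F) (a : E3) :
    (fun x => iteratedFDeriv ℝ n (fun z => f (a + z)) x)
      = fun x => iteratedFDeriv ℝ n f (a + x) := by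
  induction n with
  | zero => ext x m; simp
  | succ n IH =>
    ext x m
    rw [iteratedFDeriv_succ_apply_left, iteratedFDeriv_succ_apply_left]
    have h1 : fderiv ℝ (iteratedFDeriv ℝ n fun z => f (a + z)) x
        = fderiv ℝ (fun z => iteratedFDeriv ℝ n f (a + z)) x := by
      congr 1
    rw [h1, fderiv_comp_add_left'' (iteratedFDeriv ℝ n f) a x]

def smulCLE (c : ℝ) (hc : c ≠ 0) : E3 ≃L[ℝ] E3 :=
  (LinearEquiv.smulOfNeZero ℝ E3 c hc).toContinuousLinearEquiv

theorem smulCLE_apply (c : ℝ) (hc : c ≠ 0) (x : E3) : smulCLE c hc x = c • x := rfl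

theorem iteratedFDeriv_comp_CLE {F : Type*} [NormedAddCommGroup F] [NormedSpace ℝ F]
    (f : E3 → F) (g : E3 ≃L[ℝ] E3) (n : ℕ) (x : E3) :
    iteratedFDeriv ℝ n (f ∘ g) x
      = (iteratedFDeriv ℝ n f (g x)).compContinuousLinearMap fun _ => (g : E3 →L[ℝ] E3) := by
  have := g.iteratedFDerivWithin_comp_right f uniqueDiffOn_univ (mem_univ (g x)) n
  simpa [preimage_univ, iteratedFDerivWithin_univ] using this

theorem norm_iteratedFDeriv_comp_smul {F : Type*} [NormedAddCommGroup F] [NormedSpace ℝ F]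
    (f : E3 → F) {c : ℝ} (hc : 0 < c) (n : ℕ) (x : E3) :
    ‖iteratedFDeriv ℝ n (fun z => f (c • z)) x‖ = c ^ n * ‖iteratedFDeriv ℝ n f (c • x)‖ := by
  have hc' : c ≠ 0 := ne_of_gt hc
  have h1 : (fun z => f (c • z)) = f ∘ (smulCLE c hc') := rfl
  rw [h1, iteratedFDeriv_comp_CLE]
  have h2 : (iteratedFDeriv ℝ n f ((smulCLE c hc') x)).compContinuousLinearMap
      (fun _ => ((smulCLE c hc') : E3 →L[ℝ] E3))
      = c ^ n • iteratedFDeriv ℝ n f (c • x) := by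
    ext m
    rw [ContinuousMultilinearMap.compContinuousLinearMap_apply]
    have : (fun i : Fin n => ((smulCLE c hc') : E3 →L[ℝ] E3) (m i)) = fun i => c • m i := rfl
    rw [this]
    rw [show (fun i : Fin n => c • m i) = fun i => c • m i from rfl]
    rw [ContinuousMultilinearMap.map_smul_univ]
    simp [smulCLE_apply]
  rw [h2, norm_smul]
  simp [abs_of_pos, hc, abs_of_pos hc]

theorem norm_iteratedFDeriv_comp_affine {F : Type*} [NormedAddCommGroup F] [NormedSpace ℝ F]
    (f : E3 → F) (a : E3) {c : ℝ} (hc : 0 < c) (n : ℕ) (x : E3) :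
    ‖iteratedFDeriv ℝ n (fun z => f (a + c • z)) x‖
      = c ^ n * ‖iteratedFDeriv ℝ n f (a + c • x)‖ := by
  have h1 : (fun z : E3 => f (a + c • z)) = fun z => (fun y => f (a + y)) (c • z) := rfl
  rw [h1, norm_iteratedFDeriv_comp_smul (fun y => f (a + y)) hc n x,
    congrFun (iteratedFDeriv_comp_add_left'' n f a) (c • x)]

theorem q_contDiffOn (μ : ℝ) :
    ContDiffOn ℝ (⊤ : ℕ∞) (fun y : E3 => ‖y‖ ^ μ) {(0 : E3)}ᶜ := by
  intro y hy
  have hy' : (y : E3) ≠ 0 := hy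
  have h1 : ContDiffAt ℝ (⊤ : ℕ∞) (fun y : E3 => ‖y‖) y :=
    contDiffAt_id.norm ℝ hy'
  have h2 : ContDiffAt ℝ (⊤ : ℕ∞) (fun t : ℝ => t ^ μ) ‖y‖ :=
    Real.contDiffAt_rpow_const_of_ne (norm_ne_zero_iff.2 hy')
  exact (h2.comp y h1).contDiffWithinAt

theorem weight_bound (μ : ℝ) (n : ℕ) : ∃ C : ℝ, 1 ≤ C ∧ ∀ x : E3, x ≠ 0 →
    ‖iteratedFDeriv ℝ n (fun y : E3 => ‖y‖ ^ μ) x‖ ≤ C * ‖x‖ ^ (μ - (n : ℝ)) := by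
  set q : E3 → ℝ := fun y => ‖y‖ ^ μ with hq
  have hopen : IsOpen ({(0 : E3)}ᶜ) := isOpen_compl_singleton
  have hud : UniqueDiffOn ℝ ({(0 : E3)}ᶜ) := hopen.uniqueDiffOn
  have hcont : ContinuousOn (fun x => iteratedFDeriv ℝ n q x) {(0 : E3)}ᶜ := by
    have h := (q_contDiffOn μ).continuousOn_iteratedFDerivWithin
      (m := n) (by exact_mod_cast le_top) hud
    exact h.congr fun x hx => (iteratedFDerivWithin_of_isOpen n hopen hx).symm
  have hsub : sphere (0 : E3) 1 ⊆ {(0 : E3)}ᶜ := by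
    intro x hx
    simp only [mem_sphere_iff_norm, sub_zero] at hx
    simp [mem_compl_iff, mem_singleton_iff]
    intro h0; rw [h0] at hx; simp at hx
  obtain ⟨C₀, hC₀⟩ := (isCompact_sphere (0 : E3) 1).exists_bound_of_continuousOn
    (hcont.mono hsub)
  refine ⟨max C₀ 1, le_max_right _ _, fun x hx => ?_⟩
  have hc : (0 : ℝ) < ‖x‖ := norm_pos_iff.2 hx
  set c : ℝ := ‖x‖ with hcdef
  set u : E3 := c⁻¹ • x with hudef
  have hu1 : ‖u‖ = 1 := by
    rw [hudef, norm_smul, norm_inv, Real.norm_eq_abs, abs_of_pos hc]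
    field_simp
    exact hcdef.symm
  have hu0 : u ≠ 0 := by
    intro h; rw [h] at hu1; simp at hu1
  have hcu : c • u = x := by rw [hudef, smul_inv_smul₀ (ne_of_gt hc)]
  -- key1
  have key1 : ‖iteratedFDeriv ℝ n (fun z => q (c • z)) u‖
      = c ^ n * ‖iteratedFDeriv ℝ n q x‖ := by
    rw [norm_iteratedFDeriv_comp_smul q hc n u, hcu]
  -- key2
  have key2 : (fun z : E3 => q (c • z)) = fun z => c ^ μ • q z := by
    funext z
    rw [hq]
    simp only [smul_eq_mul]
    rw [norm_smul, Real.norm_eq_abs, abs_of_pos hc, Real.mul_rpow (le_of_lt hc) (norm_nonneg z)]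
  -- key3
  have key3 : ‖iteratedFDeriv ℝ n (fun z => c ^ μ • q z) u‖
      = c ^ μ * ‖iteratedFDeriv ℝ n q u‖ := by
    have h1 : iteratedFDerivWithin ℝ n (c ^ μ • q) ({(0 : E3)}ᶜ) u
        = c ^ μ • iteratedFDerivWithin ℝ n q ({(0 : E3)}ᶜ) u :=
      iteratedFDerivWithin_const_smul_apply (((q_contDiffOn μ) u hu0).of_le (by exact_mod_cast le_top))
        hud hu0
    have h2 : iteratedFDerivWithin ℝ n (c ^ μ • q) ({(0 : E3)}ᶜ) u
        = iteratedFDeriv ℝ n (fun z => c ^ μ • q z) u := by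
      have := iteratedFDerivWithin_of_isOpen (f := (c ^ μ • q)) (𝕜 := ℝ) n hopen (show u ∈ _ from hu0)
      exact this
    have h3 : iteratedFDerivWithin ℝ n q ({(0 : E3)}ᶜ) u = iteratedFDeriv ℝ n q u :=
      iteratedFDerivWithin_of_isOpen n hopen (show u ∈ _ from hu0)
    rw [← h2, h1, h3, norm_smul, Real.norm_eq_abs, abs_of_pos (Real.rpow_pos_of_pos hc μ)]
  have hQu : ‖iteratedFDeriv ℝ n q u‖ ≤ C₀ := hC₀ u (by simp [mem_sphere_iff_norm, hu1])
  have main : c ^ n * ‖iteratedFDeriv ℝ n q x‖ ≤ c ^ μ * max C₀ 1 := by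
    rw [← key1, key2, key3]
    have : ‖iteratedFDeriv ℝ n q u‖ ≤ max C₀ 1 := le_trans hQu (le_max_left _ _)
    exact mul_le_mul_of_nonneg_left this (le_of_lt (Real.rpow_pos_of_pos hc μ))
  have hcn : (0 : ℝ) < c ^ n := pow_pos hc n
  calc ‖iteratedFDeriv ℝ n q x‖ ≤ (c ^ μ * max C₀ 1) / c ^ n := by
        rw [le_div_iff₀ hcn]; linarith [main]
    _ = max C₀ 1 * c ^ (μ - (n : ℝ)) := by
        rw [Real.rpow_sub hc, Real.rpow_natCast]
        ring

theorem weight_bound_unif (μ : ℝ) (k : ℕ) : ∃ C : ℝ, 1 ≤ C ∧ ∀ i, i ≤ k → ∀ x : E3, x ≠ 0 →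
    ‖iteratedFDeriv ℝ i (fun y : E3 => ‖y‖ ^ μ) x‖ ≤ C * ‖x‖ ^ (μ - (i : ℝ)) := by
  choose g hg1 hg2 using weight_bound μ
  have hnn : ∀ i ∈ Finset.range (k + 1), (0 : ℝ) ≤ g i :=
    fun i _ => le_trans zero_le_one (hg1 i)
  refine ⟨∑ i ∈ Finset.range (k + 1), g i, ?_, ?_⟩
  · calc (1 : ℝ) ≤ g 0 := hg1 0
      _ ≤ ∑ i ∈ Finset.range (k + 1), g i :=
        Finset.single_le_sum hnn (by simp)
  · intro i hi x hx
    refine le_trans (hg2 i x hx) (mul_le_mul_of_nonneg_right ?_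
      (le_of_lt (Real.rpow_pos_of_pos (norm_pos_iff.2 hx) _)))
    exact Finset.single_le_sum hnn (Finset.mem_range.mpr (Nat.lt_succ_of_le hi))

theorem leibniz_norm (u v : E3 → ℝ) (hu : ContDiffOn ℝ (⊤ : ℕ∞) u {(0 : E3)}ᶜ)
    (hv : ContDiffOn ℝ (⊤ : ℕ∞) v {(0 : E3)}ᶜ) (j : ℕ) {y : E3} (hy : y ≠ 0) :
    ‖iteratedFDeriv ℝ j (fun z => u z • v z) y‖ ≤
      ∑ i ∈ Finset.range (j + 1), (j.choose i : ℝ) * ‖iteratedFDeriv ℝ i u y‖ *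
        ‖iteratedFDeriv ℝ (j - i) v y‖ := by
  have hopen : IsOpen ({(0 : E3)}ᶜ) := isOpen_compl_singleton
  have hud : UniqueDiffOn ℝ ({(0 : E3)}ᶜ) := hopen.uniqueDiffOn
  have hy' : y ∈ ({(0 : E3)}ᶜ : Set E3) := by simp [hy]
  have h := norm_iteratedFDerivWithin_smul_le (𝕜 := ℝ) hu hv hud hy'
    (n := j) (by exact_mod_cast le_top)
  calc ‖iteratedFDeriv ℝ j (fun z => u z • v z) y‖
      = ‖iteratedFDerivWithin ℝ j (fun z => u z • v z) ({(0 : E3)}ᶜ) y‖ := by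
        rw [iteratedFDerivWithin_of_isOpen _ hopen hy']
    _ ≤ ∑ i ∈ Finset.range (j + 1), (j.choose i : ℝ) *
          ‖iteratedFDerivWithin ℝ i u ({(0 : E3)}ᶜ) y‖ *
          ‖iteratedFDerivWithin ℝ (j - i) v ({(0 : E3)}ᶜ) y‖ := h
    _ = ∑ i ∈ Finset.range (j + 1), (j.choose i : ℝ) * ‖iteratedFDeriv ℝ i u y‖ *
          ‖iteratedFDeriv ℝ (j - i) v y‖ := by
        refine Finset.sum_congr rfl fun i _ => ?_
        rw [iteratedFDerivWithin_of_isOpen _ hopen hy', iteratedFDerivWithin_of_isOpen _ hopen hy']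

theorem iteratedFDeriv_congr_compl {F : Type*} [NormedAddCommGroup F] [NormedSpace ℝ F]
    {f g : E3 → F} (h : EqOn f g ({(0 : E3)}ᶜ)) (j : ℕ) {x : E3} (hx : x ≠ 0) :
    iteratedFDeriv ℝ j f x = iteratedFDeriv ℝ j g x := by
  have hopen : IsOpen ({(0 : E3)}ᶜ) := isOpen_compl_singleton
  have hx' : x ∈ ({(0 : E3)}ᶜ : Set E3) := by simp [hx]
  rw [← iteratedFDerivWithin_of_isOpen _ hopen hx', ← iteratedFDerivWithin_of_isOpen _ hopen hx',
    iteratedFDerivWithin_congr h hx']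

theorem mainR (C : ℝ) (hC : 0 ≤ C) (μ : ℝ) (u v : E3 → ℝ)
    (hu : ContDiffOn ℝ (⊤ : ℕ∞) u {(0 : E3)}ᶜ) (hv : ContDiffOn ℝ (⊤ : ℕ∞) v {(0 : E3)}ᶜ)
    (j : ℕ) (hbnd : ∀ i, i ≤ j → ∀ y : E3, y ≠ 0 →
      ‖iteratedFDeriv ℝ i u y‖ ≤ C * ‖y‖ ^ (μ - (i : ℝ)))
    (ρ : ℝ) (y : E3) (hy : y ≠ 0) :
    ‖y‖ ^ ρ * ‖iteratedFDeriv ℝ j (fun z => u z • v z) y‖ ≤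
      ∑ i ∈ Finset.range (j + 1), ((j.choose i : ℝ) * C) *
        (‖y‖ ^ (ρ + μ - (i : ℝ)) * ‖iteratedFDeriv ℝ (j - i) v y‖) := by
  have hyp : (0 : ℝ) < ‖y‖ := norm_pos_iff.2 hy
  have hρ : (0 : ℝ) ≤ ‖y‖ ^ ρ := le_of_lt (Real.rpow_pos_of_pos hyp ρ)
  calc ‖y‖ ^ ρ * ‖iteratedFDeriv ℝ j (fun z => u z • v z) y‖
      ≤ ‖y‖ ^ ρ * ∑ i ∈ Finset.range (j + 1), (j.choose i : ℝ) *
          ‖iteratedFDeriv ℝ i u y‖ * ‖iteratedFDeriv ℝ (j - i) v y‖ :=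
        mul_le_mul_of_nonneg_left (leibniz_norm u v hu hv j hy) hρ
    _ = ∑ i ∈ Finset.range (j + 1), (j.choose i : ℝ) *
          (‖y‖ ^ ρ * ‖iteratedFDeriv ℝ i u y‖) * ‖iteratedFDeriv ℝ (j - i) v y‖ := by
        rw [Finset.mul_sum]; refine Finset.sum_congr rfl fun i _ => ?_; ring
    _ ≤ ∑ i ∈ Finset.range (j + 1), ((j.choose i : ℝ) * C) *
          (‖y‖ ^ (ρ + μ - (i : ℝ)) * ‖iteratedFDeriv ℝ (j - i) v y‖) := by
        refine Finset.sum_le_sum fun i hi => ?_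
        have hij : i ≤ j := Nat.lt_succ_iff.mp (Finset.mem_range.mp hi)
        have hb : ‖y‖ ^ ρ * ‖iteratedFDeriv ℝ i u y‖ ≤ C * ‖y‖ ^ (ρ + μ - (i : ℝ)) := by
          have h1 : ‖y‖ ^ ρ * ‖iteratedFDeriv ℝ i u y‖ ≤ ‖y‖ ^ ρ * (C * ‖y‖ ^ (μ - (i : ℝ))) :=
            mul_le_mul_of_nonneg_left (hbnd i hij y hy) hρ
          have h2 : ‖y‖ ^ ρ * (C * ‖y‖ ^ (μ - (i : ℝ))) = C * ‖y‖ ^ (ρ + μ - (i : ℝ)) := by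
            rw [show ρ + μ - (i : ℝ) = ρ + (μ - (i : ℝ)) by ring, Real.rpow_add hyp]
            ring
          linarith
        have hch : (0 : ℝ) ≤ (j.choose i : ℝ) := Nat.cast_nonneg _
        have hvn : (0 : ℝ) ≤ ‖iteratedFDeriv ℝ (j - i) v y‖ := norm_nonneg _
        calc (j.choose i : ℝ) * (‖y‖ ^ ρ * ‖iteratedFDeriv ℝ i u y‖) *
              ‖iteratedFDeriv ℝ (j - i) v y‖
            ≤ (j.choose i : ℝ) * (C * ‖y‖ ^ (ρ + μ - (i : ℝ))) *
              ‖iteratedFDeriv ℝ (j - i) v y‖ := by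
              apply mul_le_mul_of_nonneg_right _ hvn
              exact mul_le_mul_of_nonneg_left hb hch
          _ = ((j.choose i : ℝ) * C) *
              (‖y‖ ^ (ρ + μ - (i : ℝ)) * ‖iteratedFDeriv ℝ (j - i) v y‖) := by ring

theorem ennStep {j k : ℕ} (hjk : j ≤ k) {C a : ℝ} (hC : 0 ≤ C) {t : ℕ → ℝ}
    (ht : ∀ i, 0 ≤ t i)
    (h : a ≤ ∑ i ∈ Finset.range (j + 1), ((j.choose i : ℝ) * C) * t i)
    {M : ℝ≥0∞} (hM : ∀ i ∈ Finset.range (j + 1), ENNReal.ofReal (t i) ≤ M) :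
    ENNReal.ofReal a ≤ ENNReal.ofReal (2 ^ k * C) * M := by
  calc ENNReal.ofReal a
      ≤ ENNReal.ofReal (∑ i ∈ Finset.range (j + 1), ((j.choose i : ℝ) * C) * t i) :=
        ENNReal.ofReal_le_ofReal h
    _ = ∑ i ∈ Finset.range (j + 1), ENNReal.ofReal (((j.choose i : ℝ) * C) * t i) :=
        ENNReal.ofReal_sum_of_nonneg fun i _ =>
          mul_nonneg (mul_nonneg (Nat.cast_nonneg _) hC) (ht i)
    _ = ∑ i ∈ Finset.range (j + 1), ENNReal.ofReal ((j.choose i : ℝ) * C) *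
          ENNReal.ofReal (t i) := by
        refine Finset.sum_congr rfl fun i _ => ?_
        rw [ENNReal.ofReal_mul (mul_nonneg (Nat.cast_nonneg _) hC)]
    _ ≤ ∑ i ∈ Finset.range (j + 1), ENNReal.ofReal ((j.choose i : ℝ) * C) * M := by
        refine Finset.sum_le_sum fun i hi => mul_le_mul_right (hM i hi) _
    _ = (∑ i ∈ Finset.range (j + 1), ENNReal.ofReal ((j.choose i : ℝ) * C)) * M := by
        rw [Finset.sum_mul]
    _ ≤ ENNReal.ofReal (2 ^ k * C) * M := by
        refine mul_le_mul_left ?_ M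
        rw [← ENNReal.ofReal_sum_of_nonneg fun i _ =>
          mul_nonneg (Nat.cast_nonneg _) hC]
        apply ENNReal.ofReal_le_ofReal
        rw [← Finset.sum_mul]
        apply mul_le_mul_of_nonneg_right _ hC
        have := Nat.sum_range_choose j
        have h2 : (∑ i ∈ Finset.range (j + 1), (j.choose i : ℝ)) = (2 : ℝ) ^ j := by
          exact_mod_cast congrArg (Nat.cast : ℕ → ℝ) this
        rw [h2]
        exact pow_le_pow_right₀ one_le_two hjk

/-- the weighted `C^{k,0}` norm is equivalent (in `[0,∞]`) to
`Σ_{j=0}^{k} sup_{x≠0} ‖x‖^{ν+j} ‖D^j f(x)‖`. -/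
theorem weightedNorm_equiv_sup_iteratedFDeriv (k : ℕ) (ν : ℝ) :
    ∃ c₁ c₂ : ℝ, 0 < c₁ ∧ 0 < c₂ ∧ ∀ f : E3 → ℝ, ContDiffOn ℝ (⊤ : ℕ∞) f {(0 : E3)}ᶜ →
      ENNReal.ofReal c₁ *
          (∑ j ∈ Finset.range (k + 1), ⨆ x : {x : E3 // x ≠ 0},
            ENNReal.ofReal (‖(x : E3)‖ ^ (ν + (j : ℝ)) * ‖iteratedFDeriv ℝ j f (x : E3)‖))
        ≤ weightedNorm k 0 ν f ∧
      weightedNorm k 0 ν f ≤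
        ENNReal.ofReal c₂ *
          (∑ j ∈ Finset.range (k + 1), ⨆ x : {x : E3 // x ≠ 0},
            ENNReal.ofReal (‖(x : E3)‖ ^ (ν + (j : ℝ)) * ‖iteratedFDeriv ℝ j f (x : E3)‖)) := by
  obtain ⟨Cp, hCp1, hCp⟩ := weight_bound_unif ν k
  obtain ⟨Cm, hCm1, hCm⟩ := weight_bound_unif (-ν) k
  set C : ℝ := max Cp Cm with hCdef
  have hC1 : (1 : ℝ) ≤ C := le_trans hCp1 (le_max_left _ _)
  have hC0 : (0 : ℝ) ≤ C := le_trans zero_le_one hC1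
  set A : ℝ := (k + 1) * (2 ^ k * C) with hAdef
  set B : ℝ := (k + 1) * (2 ^ k * (C * 2 ^ k)) with hBdef
  have hA0 : (0 : ℝ) < A := by positivity
  have hB0 : (0 : ℝ) < B := by positivity
  refine ⟨B⁻¹, A, by positivity, hA0, fun f hf => ?_⟩
  set S : ℝ≥0∞ := ∑ j ∈ Finset.range (k + 1), ⨆ x : {x : E3 // x ≠ 0},
      ENNReal.ofReal (‖(x : E3)‖ ^ (ν + (j : ℝ)) * ‖iteratedFDeriv ℝ j f (x : E3)‖) with hSdef
  set w : E3 → ℝ := fun y => ‖y‖ ^ ν • f y with hwdef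
  have hw : ContDiffOn ℝ (⊤ : ℕ∞) w {(0 : E3)}ᶜ := (q_contDiffOn ν).smul hf
  set WN : ℝ≥0∞ := weightedNorm k 0 ν f with hWNdef
  -- bounds on q-derivatives with uniform constant C
  have hCp' : ∀ i, i ≤ k → ∀ x : E3, x ≠ 0 →
      ‖iteratedFDeriv ℝ i (fun y : E3 => ‖y‖ ^ ν) x‖ ≤ C * ‖x‖ ^ (ν - (i : ℝ)) := by
    intro i hi x hx
    refine le_trans (hCp i hi x hx) ?_
    exact mul_le_mul_of_nonneg_right (le_max_left _ _)
      (le_of_lt (Real.rpow_pos_of_pos (norm_pos_iff.2 hx) _))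
  have hCm' : ∀ i, i ≤ k → ∀ x : E3, x ≠ 0 →
      ‖iteratedFDeriv ℝ i (fun y : E3 => ‖y‖ ^ (-ν)) x‖ ≤ C * ‖x‖ ^ (-ν - (i : ℝ)) := by
    intro i hi x hx
    refine le_trans (hCm i hi x hx) ?_
    exact mul_le_mul_of_nonneg_right (le_max_right _ _)
      (le_of_lt (Real.rpow_pos_of_pos (norm_pos_iff.2 hx) _))
  -- the m-th w-derivative controlled by WN
  have hwWN : ∀ m, m ≤ k → ∀ x₀ : E3, x₀ ≠ 0 →
      ENNReal.ofReal (‖x₀‖ ^ ((m : ℕ) : ℝ) * ‖iteratedFDeriv ℝ m w x₀‖) ≤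
        ENNReal.ofReal (2 ^ k) * WN := by
    intro m hm x₀ hx₀
    have hc : (0 : ℝ) < ‖x₀‖ / 2 := by
      have := norm_pos_iff.2 hx₀; linarith
    have key : ‖iteratedFDeriv ℝ m (fun z => w (x₀ + (‖x₀‖ / 2) • z)) 0‖
        = (‖x₀‖ / 2) ^ m * ‖iteratedFDeriv ℝ m w x₀‖ := by
      have := norm_iteratedFDeriv_comp_affine w x₀ hc m 0
      simpa using this
    have heq : ‖x₀‖ ^ ((m : ℕ) : ℝ) * ‖iteratedFDeriv ℝ m w x₀‖
        = 2 ^ m * ‖iteratedFDeriv ℝ m (fun z => w (x₀ + (‖x₀‖ / 2) • z)) 0‖ := by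
      rw [key, Real.rpow_natCast]
      rw [show (2 : ℝ) ^ m * ((‖x₀‖ / 2) ^ m * ‖iteratedFDeriv ℝ m w x₀‖)
          = (2 * (‖x₀‖ / 2)) ^ m * ‖iteratedFDeriv ℝ m w x₀‖ by rw [mul_pow]; ring]
      ring_nf
    rw [heq, ENNReal.ofReal_mul (by positivity)]
    have h1 : ENNReal.ofReal ‖iteratedFDeriv ℝ m (fun z => w (x₀ + (‖x₀‖ / 2) • z)) 0‖ ≤ WN := by
      rw [ofReal_norm, enorm_eq_nnnorm]
      have step1 : (‖iteratedFDeriv ℝ m (fun z => w (x₀ + (‖x₀‖ / 2) • z)) 0‖₊ : ℝ≥0∞) ≤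
          ⨆ x ∈ ball (0 : E3) 1,
            (‖iteratedFDeriv ℝ m (fun z => w (x₀ + (‖x₀‖ / 2) • z)) x‖₊ : ℝ≥0∞) := by
        exact le_iSup₂ (f := fun x (_ : x ∈ ball (0 : E3) 1) =>
          (‖iteratedFDeriv ℝ m (fun z => w (x₀ + (‖x₀‖ / 2) • z)) x‖₊ : ℝ≥0∞)) 0
          (mem_ball_self one_pos)
      refine step1.trans ?_
      have step2 : (⨆ x ∈ ball (0 : E3) 1,
          (‖iteratedFDeriv ℝ m (fun z => w (x₀ + (‖x₀‖ / 2) • z)) x‖₊ : ℝ≥0∞)) ≤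
          holderNormOn k 0 (ball (0 : E3) 1) (fun z => w (x₀ + (‖x₀‖ / 2) • z)) := by
        rw [holderNormOn, if_pos rfl, add_zero]
        exact Finset.single_le_sum (f := fun j => ⨆ x ∈ ball (0 : E3) 1,
          (‖iteratedFDeriv ℝ j (fun z => w (x₀ + (‖x₀‖ / 2) • z)) x‖₊ : ℝ≥0∞))
          (fun _ _ => zero_le) (Finset.mem_range.mpr (Nat.lt_succ_of_le hm))
      refine step2.trans ?_
      exact le_iSup (fun P : {P : E3 // P ≠ 0} =>
        holderNormOn k 0 (ball (0 : E3) 1)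
          (fun x => ‖chartH (↑P) x‖ ^ ν • f (chartH (↑P) x))) ⟨x₀, hx₀⟩
    exact mul_le_mul' (ENNReal.ofReal_le_ofReal
      (pow_le_pow_right₀ one_le_two hm)) h1
  -- ofReal of f-term bounded by S
  have hfS : ∀ m, m ≤ k → ∀ y : E3, y ≠ 0 →
      ENNReal.ofReal (‖y‖ ^ (ν + ((m : ℕ) : ℝ)) * ‖iteratedFDeriv ℝ m f y‖) ≤ S := by
    intro m hm y hy
    have h1 : ENNReal.ofReal (‖y‖ ^ (ν + ((m : ℕ) : ℝ)) * ‖iteratedFDeriv ℝ m f y‖) ≤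
        ⨆ x : {x : E3 // x ≠ 0},
          ENNReal.ofReal (‖(x : E3)‖ ^ (ν + ((m : ℕ) : ℝ)) * ‖iteratedFDeriv ℝ m f (x : E3)‖) :=
      le_iSup (fun x : {x : E3 // x ≠ 0} =>
        ENNReal.ofReal (‖(x : E3)‖ ^ (ν + ((m : ℕ) : ℝ)) * ‖iteratedFDeriv ℝ m f (x : E3)‖))
        ⟨y, hy⟩
    refine h1.trans ?_
    exact Finset.single_le_sum (f := fun j : ℕ => ⨆ x : {x : E3 // x ≠ 0},
      ENNReal.ofReal (‖(x : E3)‖ ^ (ν + (j : ℝ)) * ‖iteratedFDeriv ℝ j f (x : E3)‖))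
      (fun _ _ => zero_le) (Finset.mem_range.mpr (Nat.lt_succ_of_le hm))
  constructor
  · -- lower bound
    have hlow : S ≤ ENNReal.ofReal B * WN := by
      rw [hSdef]
      have hterm : ∀ j, j ≤ k →
          (⨆ x : {x : E3 // x ≠ 0},
            ENNReal.ofReal (‖(x : E3)‖ ^ (ν + (j : ℝ)) * ‖iteratedFDeriv ℝ j f (x : E3)‖)) ≤
          ENNReal.ofReal (2 ^ k * C) * (ENNReal.ofReal (2 ^ k) * WN) := by
        intro j hj
        refine iSup_le ?_
        rintro ⟨x₀, hx₀⟩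
        have hfw : iteratedFDeriv ℝ j f x₀
            = iteratedFDeriv ℝ j (fun z => (fun y : E3 => ‖y‖ ^ (-ν)) z • w z) x₀ := by
          refine iteratedFDeriv_congr_compl ?_ j hx₀
          intro y hy
          have hy' : y ≠ 0 := hy
          have hyp : (0 : ℝ) < ‖y‖ := norm_pos_iff.2 hy'
          show f y = ‖y‖ ^ (-ν) • (‖y‖ ^ ν • f y)
          rw [smul_smul, ← Real.rpow_add hyp]
          simp
        have hreal : ‖x₀‖ ^ (ν + (j : ℝ)) * ‖iteratedFDeriv ℝ j f x₀‖ ≤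
            ∑ i ∈ Finset.range (j + 1), ((j.choose i : ℝ) * C) *
              (‖x₀‖ ^ (((j - i : ℕ)) : ℝ) * ‖iteratedFDeriv ℝ (j - i) w x₀‖) := by
          rw [hfw]
          have h := mainR C hC0 (-ν) (fun y : E3 => ‖y‖ ^ (-ν)) w (q_contDiffOn (-ν)) hw j
            (fun i hi y hy => hCm' i (le_trans hi hj) y hy) (ν + (j : ℝ)) x₀ hx₀
          refine h.trans (le_of_eq ?_)
          refine Finset.sum_congr rfl fun i hi => ?_
          have hij : i ≤ j := Nat.lt_succ_iff.mp (Finset.mem_range.mp hi)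
          congr 2
          rw [Nat.cast_sub hij]
          ring
        refine ennStep hj hC0 (t := fun i =>
            ‖x₀‖ ^ (((j - i : ℕ)) : ℝ) * ‖iteratedFDeriv ℝ (j - i) w x₀‖)
          (fun i => by positivity) hreal ?_
        intro i hi
        have hij : i ≤ j := Nat.lt_succ_iff.mp (Finset.mem_range.mp hi)
        exact hwWN (j - i) (le_trans (Nat.sub_le _ _) hj) x₀ hx₀
      calc (∑ j ∈ Finset.range (k + 1), ⨆ x : {x : E3 // x ≠ 0},
            ENNReal.ofReal (‖(x : E3)‖ ^ (ν + (j : ℝ)) * ‖iteratedFDeriv ℝ j f (x : E3)‖))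
          ≤ ∑ _j ∈ Finset.range (k + 1),
              ENNReal.ofReal (2 ^ k * C) * (ENNReal.ofReal (2 ^ k) * WN) :=
            Finset.sum_le_sum fun j hj =>
              hterm j (Nat.lt_succ_iff.mp (Finset.mem_range.mp hj))
        _ = (k + 1 : ℕ) * (ENNReal.ofReal (2 ^ k * C) * (ENNReal.ofReal (2 ^ k) * WN)) := by
            rw [Finset.sum_const, Finset.card_range, nsmul_eq_mul]
        _ = ENNReal.ofReal (((k + 1 : ℕ) : ℝ) * ((2 ^ k * C) * 2 ^ k)) * WN := by
            rw [← mul_assoc (ENNReal.ofReal (2 ^ k * C)),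
              ← ENNReal.ofReal_mul (by positivity : (0:ℝ) ≤ 2 ^ k * C),
              ← ENNReal.ofReal_natCast (k + 1), ← mul_assoc,
              ← ENNReal.ofReal_mul (by positivity : (0:ℝ) ≤ ((k + 1 : ℕ) : ℝ))]
        _ = ENNReal.ofReal B * WN := by
            congr 1
            rw [hBdef]
            push_cast
            ring
    calc ENNReal.ofReal B⁻¹ * S ≤ ENNReal.ofReal B⁻¹ * (ENNReal.ofReal B * WN) :=
          mul_le_mul_right hlow _
      _ = (ENNReal.ofReal B⁻¹ * ENNReal.ofReal B) * WN := by rw [mul_assoc]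
      _ = ENNReal.ofReal (B⁻¹ * B) * WN := by
          rw [ENNReal.ofReal_mul (by positivity : (0:ℝ) ≤ B⁻¹)]
      _ = WN := by
          rw [inv_mul_cancel₀ (ne_of_gt hB0)]
          simp
  · -- upper bound
    rw [hWNdef, weightedNorm]
    refine iSup_le ?_
    rintro ⟨P, hP⟩
    have hc : (0 : ℝ) < ‖P‖ / 2 := by
      have := norm_pos_iff.2 hP; linarith
    rw [holderNormOn, if_pos rfl, add_zero]
    have hterm : ∀ j, j ≤ k →
        (⨆ x ∈ ball (0 : E3) 1,
          (‖iteratedFDeriv ℝ j (fun x => ‖chartH P x‖ ^ ν • f (chartH P x)) x‖₊ : ℝ≥0∞)) ≤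
        ENNReal.ofReal (2 ^ k * C) * S := by
      intro j hj
      refine iSup₂_le ?_
      intro x hx
      have hxlt : ‖x‖ < 1 := by simpa [dist_zero_right] using hx
      set y : E3 := chartH P x with hydef
      have hyc : ‖P‖ / 2 ≤ ‖y‖ := by
        have h1 : ‖y‖ ≥ ‖P‖ - ‖(‖P‖ / 2) • x‖ := by
          have := norm_sub_norm_le P (-((‖P‖ / 2) • x))
          simp only [norm_neg] at this
          calc ‖P‖ - ‖(‖P‖ / 2) • x‖ ≤ ‖P - -((‖P‖ / 2) • x)‖ := this
            _ = ‖y‖ := by rw [hydef]; congr 1; show P - -((‖P‖/2) • x) = chartH P x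
                          rw [chartH]; abel
        have h2 : ‖(‖P‖ / 2) • x‖ ≤ ‖P‖ / 2 := by
          rw [norm_smul, Real.norm_eq_abs, abs_of_pos hc]
          nlinarith
        linarith
      have hy0 : y ≠ 0 := by
        intro h
        rw [h] at hyc
        simp at hyc
        linarith
      have key : ‖iteratedFDeriv ℝ j (fun x => ‖chartH P x‖ ^ ν • f (chartH P x)) x‖
          = (‖P‖ / 2) ^ j * ‖iteratedFDeriv ℝ j w y‖ := by
        have h1 : (fun x => ‖chartH P x‖ ^ ν • f (chartH P x))
            = fun z => w (P + (‖P‖ / 2) • z) := rfl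
        rw [h1, norm_iteratedFDeriv_comp_affine w P hc j x]
        rfl
      have hreal : ‖iteratedFDeriv ℝ j (fun x => ‖chartH P x‖ ^ ν • f (chartH P x)) x‖ ≤
          ∑ i ∈ Finset.range (j + 1), ((j.choose i : ℝ) * C) *
            (‖y‖ ^ (ν + (((j - i : ℕ)) : ℝ)) * ‖iteratedFDeriv ℝ (j - i) f y‖) := by
        rw [key]
        have hstep : (‖P‖ / 2) ^ j * ‖iteratedFDeriv ℝ j w y‖ ≤
            ‖y‖ ^ ((j : ℕ) : ℝ) * ‖iteratedFDeriv ℝ j w y‖ := by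
          rw [Real.rpow_natCast]
          exact mul_le_mul_of_nonneg_right (pow_le_pow_left₀ (le_of_lt hc) hyc j)
            (norm_nonneg _)
        refine hstep.trans ?_
        have h := mainR C hC0 ν (fun y : E3 => ‖y‖ ^ ν) f (q_contDiffOn ν) hf j
          (fun i hi y hy => hCp' i (le_trans hi hj) y hy) ((j : ℕ) : ℝ) y hy0
        have h2 : iteratedFDeriv ℝ j w y
            = iteratedFDeriv ℝ j (fun z => (fun y : E3 => ‖y‖ ^ ν) z • f z) y := rfl
        rw [h2]
        refine h.trans (le_of_eq ?_)
        refine Finset.sum_congr rfl fun i hi => ?_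
        have hij : i ≤ j := Nat.lt_succ_iff.mp (Finset.mem_range.mp hi)
        congr 2
        rw [Nat.cast_sub hij]
        ring
      rw [← enorm_eq_nnnorm, ← ofReal_norm]
      refine ennStep hj hC0 (t := fun i =>
          ‖y‖ ^ (ν + (((j - i : ℕ)) : ℝ)) * ‖iteratedFDeriv ℝ (j - i) f y‖)
        (fun i => by positivity) hreal ?_
      intro i hi
      exact hfS (j - i) (le_trans (Nat.sub_le _ _) hj) y hy0
    calc (∑ j ∈ Finset.range (k + 1), ⨆ x ∈ ball (0 : E3) 1,
          (‖iteratedFDeriv ℝ j (fun x => ‖chartH P x‖ ^ ν • f (chartH P x)) x‖₊ : ℝ≥0∞))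
        ≤ ∑ _j ∈ Finset.range (k + 1), ENNReal.ofReal (2 ^ k * C) * S :=
          Finset.sum_le_sum fun j hj =>
            hterm j (Nat.lt_succ_iff.mp (Finset.mem_range.mp hj))
      _ = (k + 1 : ℕ) * (ENNReal.ofReal (2 ^ k * C) * S) := by
          rw [Finset.sum_const, Finset.card_range, nsmul_eq_mul]
      _ = ENNReal.ofReal (((k + 1 : ℕ) : ℝ) * (2 ^ k * C)) * S := by
          rw [← ENNReal.ofReal_natCast (k + 1), ← mul_assoc,
            ← ENNReal.ofReal_mul (by positivity : (0:ℝ) ≤ ((k + 1 : ℕ) : ℝ))]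
      _ = ENNReal.ofReal A * S := by
          congr 1
          rw [hAdef]
          push_cast
          ring
end
end

section
/- Let ν ∈ (3/2, 2) and c ≥ 0. Suppose ψ : ℝ³∖{0} → ℝ is a smooth function which is harmonic on ℝ³∖{0} (i.e. Δψ(x) = Σ_a ∂_a∂_a ψ(x) = 0 for all x ≠ 0), and suppose that for every x ≠ 0 one has |ψ(x)| ≤ c‖x‖^{1−ν} and ‖∇ψ(x)‖ ≤ c‖x‖^{−ν}. Then ψ = 0 identically on ℝ³∖{0}. -/
open Metric Set

noncomputable section

/-- 1D second derivative test. -/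
lemma second_deriv_test {h h1 : ℝ → ℝ} {L : ℝ}
    (hmax : IsLocalMax h 0)
    (hd : ∀ᶠ t in nhds (0:ℝ), HasDerivAt h (h1 t) t)
    (hd1 : HasDerivAt h1 L 0) : L ≤ 0 := by
  by_contra hL
  push_neg at hL
  have h10 : h1 0 = 0 := by
    have := hmax.deriv_eq_zero
    have hd0 : HasDerivAt h (h1 0) 0 := hd.self_of_nhds
    rw [hd0.deriv] at this; exact this
  have hslope := hasDerivAt_iff_tendsto_slope.1 hd1
  have hev : ∀ᶠ t in nhdsWithin (0:ℝ) {(0:ℝ)}ᶜ, 0 < slope h1 0 t :=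
    hslope.eventually (eventually_gt_nhds hL)
  have hev' : ∀ᶠ t in nhds (0:ℝ), (0 < t → 0 < h1 t) ∧
      HasDerivAt h (h1 t) t ∧ h t ≤ h 0 := by
    have h1pos := eventually_nhdsWithin_iff.1 hev
    filter_upwards [h1pos, hd, hmax] with t ht1 ht2 ht3
    refine ⟨fun htp => ?_, ht2, ht3⟩
    have hs := ht1 (by simpa using ne_of_gt htp)
    rw [slope_def_field, h10, sub_zero, sub_zero] at hs
    have := mul_pos hs htp
    rwa [div_mul_cancel₀ _ (ne_of_gt htp)] at this
  rw [Metric.eventually_nhds_iff] at hev'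
  obtain ⟨ε, hε, hQ⟩ := hev'
  set δ := ε / 2 with hδdef
  have hδ : 0 < δ := by positivity
  have hmem : ∀ t ∈ Set.Icc (0:ℝ) δ, dist t 0 < ε := by
    intro t ht
    rw [Real.dist_eq, sub_zero, abs_of_nonneg ht.1]
    calc t ≤ δ := ht.2
    _ < ε := by simp [hδdef]; linarith
  obtain ⟨ξ, hξ, hξs⟩ := exists_hasDerivAt_eq_slope h h1 hδ
    (fun t ht => ((hQ (hmem t ht)).2.1).continuousAt.continuousWithinAt)
    (fun t ht => (hQ (hmem t (Set.mem_Icc_of_Ioo ht))).2.1)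
  have hξpos : 0 < h1 ξ := (hQ (hmem ξ (Set.mem_Icc_of_Ioo hξ))).1 hξ.1
  have hδle : h δ ≤ h 0 := (hQ (hmem δ ⟨le_of_lt hδ, le_refl _⟩)).2.2
  rw [hξs] at hξpos
  have : (h δ - h 0) / (δ - 0) ≤ 0 := by
    apply div_nonpos_of_nonpos_of_nonneg <;> linarith
  linarith


lemma pd_contDiffAt {g : E3 → ℝ} {x : E3} {n : ℕ} (a : Fin 3)
    (hg : ContDiffAt ℝ (n + 1) g x) : ContDiffAt ℝ n (pd a g) x := by
  have h1 : ContDiffAt ℝ n (fderiv ℝ g) x := hg.fderiv_right (le_refl _)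
  exact h1.clm_apply contDiffAt_const

lemma isLocalMax_lap_nonpos {g : E3 → ℝ} {x₀ : E3}
    (hg : ContDiffAt ℝ 2 g x₀) (hmax : IsLocalMax g x₀) : lap g x₀ ≤ 0 := by
  apply Finset.sum_nonpos
  intro a _
  set v : E3 := EuclideanSpace.single a 1 with hv
  set ℓ : ℝ → E3 := fun t => x₀ + t • v with hℓ
  have hℓ0 : ℓ 0 = x₀ := by simp [hℓ]
  have hℓd : ∀ t : ℝ, HasDerivAt ℓ v t := by
    intro t
    simpa [hℓ] using ((hasDerivAt_id t).smul_const v).const_add x₀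
  have hℓc : Continuous ℓ := by fun_prop
  -- h = g ∘ ℓ, h1 = pd a g ∘ ℓ
  have hφ : ContDiffAt ℝ 1 (pd a g) x₀ := pd_contDiffAt a (by exact_mod_cast hg)
  have hφd : DifferentiableAt ℝ (pd a g) x₀ := hφ.differentiableAt (by norm_num)
  -- eventual differentiability of g
  have hgev : ∀ᶠ y in nhds x₀, DifferentiableAt ℝ g y := by
    filter_upwards [hg.eventually (by simp)] with y hy
    exact hy.differentiableAt (by norm_num)
  have htend : Filter.Tendsto ℓ (nhds 0) (nhds x₀) := by
    rw [← hℓ0]; exact hℓc.continuousAt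
  have hd : ∀ᶠ t in nhds (0:ℝ), HasDerivAt (fun t => g (ℓ t)) (pd a g (ℓ t)) t := by
    filter_upwards [htend.eventually hgev] with t ht
    exact ht.hasFDerivAt.comp_hasDerivAt t (hℓd t)
  have hd1 : HasDerivAt (fun t => pd a g (ℓ t)) (pd a (pd a g) x₀) 0 := by
    have hx : HasFDerivAt (pd a g) (fderiv ℝ (pd a g) x₀) (ℓ 0) := hℓ0 ▸ hφd.hasFDerivAt
    have := hx.comp_hasDerivAt 0 (hℓd 0)
    exact this
  have hmax' : IsLocalMax (fun t => g (ℓ t)) 0 := by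
    have : ∀ᶠ t in nhds (0:ℝ), g (ℓ t) ≤ g x₀ := htend.eventually hmax
    simpa [IsLocalMax, IsMaxFilter, hℓ0] using this
  exact second_deriv_test hmax' hd hd1

noncomputable def qE : E3 → ℝ := fun x => ∑ a : Fin 3, x a ^ 2

lemma qE_eq_norm_sq (x : E3) : qE x = ‖x‖ ^ 2 := by
  rw [EuclideanSpace.norm_eq, Real.sq_sqrt (by positivity)]
  simp [qE, sq_abs]

lemma qE_pos {x : E3} (hx : x ≠ 0) : 0 < qE x := by
  rw [qE_eq_norm_sq]
  have : 0 < ‖x‖ := norm_pos_iff.2 hx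
  positivity

lemma hasFDerivAt_qE (x : E3) :
    HasFDerivAt qE (∑ b : Fin 3, (2 * x b) • (EuclideanSpace.proj b : E3 →L[ℝ] ℝ)) x := by
  have : ∀ b : Fin 3, HasFDerivAt (fun y : E3 => y b ^ 2)
      ((2 * x b) • (EuclideanSpace.proj b : E3 →L[ℝ] ℝ)) x := by
    intro b
    have h0 := (EuclideanSpace.proj b : E3 →L[ℝ] ℝ).hasFDerivAt (x := x)
    have h := h0.mul h0
    have : (2 * x b) • (EuclideanSpace.proj b : E3 →L[ℝ] ℝ)
        = x b • (EuclideanSpace.proj b : E3 →L[ℝ] ℝ) + x b • (EuclideanSpace.proj b : E3 →L[ℝ] ℝ) := by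
      rw [two_mul, add_smul]
    rw [this]
    simpa [sq, Pi.mul_def] using h
  exact HasFDerivAt.fun_sum (fun b _ => this b)

lemma deriv_qE_apply (x : E3) (a : Fin 3) :
    (∑ b : Fin 3, (2 * x b) • (EuclideanSpace.proj b : E3 →L[ℝ] ℝ))
      (EuclideanSpace.single a 1) = 2 * x a := by
  simp [ContinuousLinearMap.sum_apply, EuclideanSpace.single_apply]

lemma pd_qE (a : Fin 3) (x : E3) : pd a qE x = 2 * x a := by
  rw [pd, (hasFDerivAt_qE x).fderiv, deriv_qE_apply]

lemma lap_qE (x : E3) : lap qE x = 6 := by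
  have h1 : ∀ a : Fin 3, pd a qE = fun y : E3 => 2 * y a := by
    intro a; funext y; exact pd_qE a y
  have h2 : ∀ a : Fin 3, pd a (pd a qE) x = 2 := by
    intro a
    rw [pd, h1 a]
    have : HasFDerivAt (fun y : E3 => 2 * y a)
        ((2:ℝ) • (EuclideanSpace.proj a : E3 →L[ℝ] ℝ)) x := by
      simpa using ((EuclideanSpace.proj a : E3 →L[ℝ] ℝ).hasFDerivAt (x := x)).const_mul (2:ℝ)
    rw [this.fderiv]
    simp [EuclideanSpace.single_apply]
  rw [lap]
  simp [h2]
  norm_num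

noncomputable def GE : E3 → ℝ := fun x => qE x ^ (-(1:ℝ)/2)

lemma GE_eq (x : E3) : GE x = ‖x‖⁻¹ := by
  rw [GE, qE_eq_norm_sq, ← Real.rpow_natCast ‖x‖ 2, ← Real.rpow_mul (norm_nonneg x)]
  norm_num
  rw [Real.rpow_neg_one]

lemma hasFDerivAt_GE {x : E3} (hx : x ≠ 0) :
    HasFDerivAt GE ((-(1:ℝ)/2 * qE x ^ (-(1:ℝ)/2 - 1)) •
      (∑ b : Fin 3, (2 * x b) • (EuclideanSpace.proj b : E3 →L[ℝ] ℝ))) x :=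
  (hasFDerivAt_qE x).rpow_const (Or.inl (ne_of_gt (qE_pos hx)))

lemma pd_GE (a : Fin 3) {x : E3} (hx : x ≠ 0) :
    pd a GE x = -(qE x ^ (-(3:ℝ)/2)) * x a := by
  rw [pd, (hasFDerivAt_GE hx).fderiv]
  rw [ContinuousLinearMap.smul_apply, deriv_qE_apply]
  have he : (-(1:ℝ)/2 - 1) = -(3:ℝ)/2 := by norm_num
  rw [he, smul_eq_mul]
  ring

lemma lap_GE {x : E3} (hx : x ≠ 0) : lap GE x = 0 := by
  have hopen : IsOpen ({(0:E3)}ᶜ) := isOpen_compl_singleton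
  -- second derivatives
  have h2 : ∀ a : Fin 3, pd a (pd a GE) x
      = -(qE x ^ (-(3:ℝ)/2)) + 3 * qE x ^ (-(5:ℝ)/2) * (x a)^2 := by
    intro a
    have hev : (fun y => -(qE y ^ (-(3:ℝ)/2)) * y a) =ᶠ[nhds x] pd a GE := by
      filter_upwards [hopen.mem_nhds hx] with y hy
      exact (pd_GE a hy).symm
    rw [pd, ← hev.fderiv_eq]
    -- fderiv of the explicit formula
    have hf1 : HasFDerivAt (fun y : E3 => -(qE y ^ (-(3:ℝ)/2)))
        (-((-(3:ℝ)/2 * qE x ^ (-(3:ℝ)/2 - 1)) •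
          (∑ b : Fin 3, (2 * x b) • (EuclideanSpace.proj b : E3 →L[ℝ] ℝ)))) x :=
      ((hasFDerivAt_qE x).rpow_const (Or.inl (ne_of_gt (qE_pos hx)))).neg
    have hf2 := (EuclideanSpace.proj a : E3 →L[ℝ] ℝ).hasFDerivAt (x := x)
    have hprod := hf1.mul hf2
    have hprod' : HasFDerivAt (fun y : E3 => -(qE y ^ (-(3:ℝ)/2)) * y a)
        (-(qE x ^ (-(3:ℝ)/2)) • (EuclideanSpace.proj a : E3 →L[ℝ] ℝ) +
          x a • -((-(3:ℝ)/2 * qE x ^ (-(3:ℝ)/2 - 1)) •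
            (∑ b : Fin 3, (2 * x b) • (EuclideanSpace.proj b : E3 →L[ℝ] ℝ)))) x := hprod
    rw [hprod'.fderiv]
    rw [ContinuousLinearMap.add_apply, ContinuousLinearMap.smul_apply,
      ContinuousLinearMap.smul_apply, ContinuousLinearMap.neg_apply,
      ContinuousLinearMap.smul_apply, deriv_qE_apply]
    have he : (-(3:ℝ)/2 - 1) = -(5:ℝ)/2 := by norm_num
    rw [he]
    have ha : (EuclideanSpace.proj a : E3 →L[ℝ] ℝ) (EuclideanSpace.single a 1) = 1 := by
      simp [EuclideanSpace.single_apply]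
    rw [ha]
    simp only [smul_eq_mul]
    ring
  rw [lap]
  simp only [h2]
  rw [Finset.sum_add_distrib]
  have hsq : ∑ a : Fin 3, 3 * qE x ^ (-(5:ℝ)/2) * (x a)^2
      = 3 * qE x ^ (-(5:ℝ)/2) * qE x := by
    rw [← Finset.mul_sum]; rfl
  rw [hsq]
  have hq : qE x ^ (-(5:ℝ)/2) * qE x = qE x ^ (-(3:ℝ)/2) := by
    nth_rewrite 2 [← Real.rpow_one (qE x)]
    rw [← Real.rpow_add (qE_pos hx)]
    norm_num
  rw [mul_assoc, hq]
  simp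

lemma pd_comb (a : Fin 3) {f g : E3 → ℝ} {x : E3} (hf : DifferentiableAt ℝ f x)
    (hg : DifferentiableAt ℝ g x) (s t : ℝ) :
    pd a (fun y => s * f y + t * g y) x = s * pd a f x + t * pd a g x := by
  rw [pd, pd, pd]
  have h1 : DifferentiableAt ℝ (fun y => s * f y) x := hf.const_mul s
  have h2 : DifferentiableAt ℝ (fun y => t * g y) x := hg.const_mul t
  rw [fderiv_fun_add h1 h2, fderiv_const_mul hf s, fderiv_const_mul hg t]
  simp

lemma pd_contDiffAt' {g : E3 → ℝ} {x : E3} {n : ℕ} (a : Fin 3)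
    (hg : ContDiffAt ℝ (n + 1) g x) : ContDiffAt ℝ n (pd a g) x :=
  (hg.fderiv_right (le_refl _)).clm_apply contDiffAt_const

lemma lap_comb {f g : E3 → ℝ} {x : E3} (hf : ContDiffAt ℝ 2 f x)
    (hg : ContDiffAt ℝ 2 g x) (s t : ℝ) :
    lap (fun y => s * f y + t * g y) x = s * lap f x + t * lap g x := by
  have key : ∀ a : Fin 3, pd a (pd a (fun y => s * f y + t * g y)) x
      = s * pd a (pd a f) x + t * pd a (pd a g) x := by
    intro a
    have hev : (fun y => s * pd a f y + t * pd a g y)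
        =ᶠ[nhds x] pd a (fun y => s * f y + t * g y) := by
      filter_upwards [hf.eventually (by simp), hg.eventually (by simp)] with y hfy hgy
      exact (pd_comb a (hfy.differentiableAt (by norm_num))
        (hgy.differentiableAt (by norm_num)) s t).symm
    rw [pd, ← hev.fderiv_eq, ← pd]
    have hdf : DifferentiableAt ℝ (pd a f) x :=
      (pd_contDiffAt' (n := 1) a (by exact_mod_cast hf)).differentiableAt (by norm_num)
    have hdg : DifferentiableAt ℝ (pd a g) x :=
      (pd_contDiffAt' (n := 1) a (by exact_mod_cast hg)).differentiableAt (by norm_num)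
    exact pd_comb a hdf hdg s t
  rw [lap]
  simp only [key]
  rw [Finset.sum_add_distrib, ← Finset.mul_sum, ← Finset.mul_sum]
  rfl

lemma contDiffAt_qE {x : E3} : ContDiffAt ℝ 2 qE x := by
  apply ContDiff.contDiffAt
  apply ContDiff.sum
  intro b _
  exact ((EuclideanSpace.proj b : E3 →L[ℝ] ℝ).contDiff).pow 2

lemma contDiffAt_GE {x : E3} (hx : x ≠ 0) : ContDiffAt ℝ 2 GE x :=
  contDiffAt_qE.rpow_const_of_ne (ne_of_gt (qE_pos hx))

lemma pd_comb3 (a : Fin 3) {f g h : E3 → ℝ} {x : E3} (hf : DifferentiableAt ℝ f x)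
    (hg : DifferentiableAt ℝ g x) (hh : DifferentiableAt ℝ h x) (s t u : ℝ) :
    pd a (fun y => s * f y + t * g y + u * h y) x
      = s * pd a f x + t * pd a g x + u * pd a h x := by
  rw [pd, pd, pd, pd]
  have h1 : DifferentiableAt ℝ (fun y => s * f y) x := hf.const_mul s
  have h2 : DifferentiableAt ℝ (fun y => t * g y) x := hg.const_mul t
  have h3 : DifferentiableAt ℝ (fun y => u * h y) x := hh.const_mul u
  rw [fderiv_fun_add (h1.fun_add h2) h3, fderiv_fun_add h1 h2, fderiv_const_mul hf s,
    fderiv_const_mul hg t, fderiv_const_mul hh u]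
  simp

lemma lap_comb3 {f g h : E3 → ℝ} {x : E3} (hf : ContDiffAt ℝ 2 f x)
    (hg : ContDiffAt ℝ 2 g x) (hh : ContDiffAt ℝ 2 h x) (s t u : ℝ) :
    lap (fun y => s * f y + t * g y + u * h y) x
      = s * lap f x + t * lap g x + u * lap h x := by
  have key : ∀ a : Fin 3, pd a (pd a (fun y => s * f y + t * g y + u * h y)) x
      = s * pd a (pd a f) x + t * pd a (pd a g) x + u * pd a (pd a h) x := by
    intro a
    have hev : (fun y => s * pd a f y + t * pd a g y + u * pd a h y)
        =ᶠ[nhds x] pd a (fun y => s * f y + t * g y + u * h y) := by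
      filter_upwards [hf.eventually (by simp), hg.eventually (by simp),
        hh.eventually (by simp)] with y hfy hgy hhy
      exact (pd_comb3 a (hfy.differentiableAt (by norm_num))
        (hgy.differentiableAt (by norm_num)) (hhy.differentiableAt (by norm_num)) s t u).symm
    rw [pd, ← hev.fderiv_eq, ← pd]
    exact pd_comb3 a
      ((pd_contDiffAt' (n := 1) a (by exact_mod_cast hf)).differentiableAt (by norm_num))
      ((pd_contDiffAt' (n := 1) a (by exact_mod_cast hg)).differentiableAt (by norm_num))
      ((pd_contDiffAt' (n := 1) a (by exact_mod_cast hh)).differentiableAt (by norm_num)) s t u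
  rw [lap]
  simp only [key]
  rw [Finset.sum_add_distrib, Finset.sum_add_distrib, ← Finset.mul_sum, ← Finset.mul_sum,
    ← Finset.mul_sum]
  rfl

lemma annulus_estimate (ν c : ℝ) (hν : ν ∈ Set.Ioo (3 / 2 : ℝ) 2) (hc : 0 ≤ c)
    (ψ : E3 → ℝ) (hψ : ContDiffOn ℝ (⊤ : ℕ∞) ψ {(0 : E3)}ᶜ)
    (hharm : ∀ x : E3, x ≠ 0 → lap ψ x = 0)
    (hb1 : ∀ x : E3, x ≠ 0 → |ψ x| ≤ c * ‖x‖ ^ (1 - ν))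
    (s : ℝ) (hs : s = 1 ∨ s = -1) (x₀ : E3) {r R : ℝ}
    (hr : 0 < r) (hrx : r < ‖x₀‖) (hxR : ‖x₀‖ < R) :
    s * ψ x₀ ≤ c * r ^ (2 - ν) / ‖x₀‖ + c * R ^ (1 - ν) := by
  have hx₀pos : 0 < ‖x₀‖ := lt_trans hr hrx
  have hRpos : 0 < R := lt_trans hx₀pos hxR
  have hψCD : ∀ {y : E3}, y ≠ 0 → ContDiffAt ℝ 2 ψ y := by
    intro y hy
    apply (hψ.contDiffAt (isOpen_compl_singleton.mem_nhds hy)).of_le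
    rw [show ((2:WithTop ℕ∞)) = ((2:ℕ∞) : WithTop ℕ∞) from rfl]
    exact WithTop.coe_le_coe.2 le_top
  apply le_of_forall_pos_le_add
  intro η hη
  set ε : ℝ := η / R ^ 2 with hεdef
  have hεpos : 0 < ε := by positivity
  have hεR : ε * R ^ 2 = η := by
    rw [hεdef]; field_simp
  clear_value ε
  set w : E3 → ℝ := fun y => s * ψ y + (-(c * r ^ (2 - ν))) * GE y + ε * qE y with hw
  set A : Set E3 := Metric.closedBall 0 R ∩ {x : E3 | r ≤ ‖x‖} with hA
  have hA_norm : ∀ {y : E3}, y ∈ A → r ≤ ‖y‖ ∧ ‖y‖ ≤ R := by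
    intro y hy
    refine ⟨hy.2, ?_⟩
    have := hy.1
    rwa [Metric.mem_closedBall, dist_zero_right] at this
  have hne0 : ∀ {y : E3}, y ∈ A → y ≠ 0 := by
    intro y hy h0
    have h2 := (hA_norm hy).1
    rw [h0, norm_zero] at h2
    linarith
  have hAx₀ : x₀ ∈ A := ⟨by simpa [dist_zero_right] using le_of_lt hxR, le_of_lt hrx⟩
  have hcomp : IsCompact A :=
    (isCompact_closedBall 0 R).inter_right (isClosed_le continuous_const continuous_norm)
  have hGEc : ContinuousOn GE A := fun y hy =>
    ((contDiffAt_GE (hne0 hy)).continuousAt).continuousWithinAt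
  have hwc : ContinuousOn w A := by
    apply ContinuousOn.add
    apply ContinuousOn.add
    · exact continuousOn_const.mul ((hψ.continuousOn).mono (fun y hy => hne0 hy))
    · exact continuousOn_const.mul hGEc
    · exact continuousOn_const.mul (fun y _ => contDiffAt_qE.continuousAt.continuousWithinAt)
  obtain ⟨y, hyA, hymax⟩ := hcomp.exists_isMaxOn ⟨x₀, hAx₀⟩ hwc
  -- the max is attained on the boundary
  have hbd : ‖y‖ = r ∨ ‖y‖ = R := by
    by_contra hcon
    push_neg at hcon
    have hyr : r < ‖y‖ := lt_of_le_of_ne (hA_norm hyA).1 (Ne.symm hcon.1)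
    have hyR : ‖y‖ < R := lt_of_le_of_ne (hA_norm hyA).2 hcon.2
    have hy0 : y ≠ 0 := hne0 hyA
    -- interior point: local max
    have hU : IsOpen (Metric.ball (0:E3) R ∩ {x : E3 | r < ‖x‖}) :=
      Metric.isOpen_ball.inter (isOpen_lt continuous_const continuous_norm)
    have hyU : y ∈ Metric.ball (0:E3) R ∩ {x : E3 | r < ‖x‖} :=
      ⟨by simpa [dist_zero_right] using hyR, hyr⟩
    have hUA : (Metric.ball (0:E3) R ∩ {x : E3 | r < ‖x‖}) ⊆ A := by
      intro z hz
      have hz2 : r < ‖z‖ := hz.2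
      exact ⟨Metric.ball_subset_closedBall hz.1, le_of_lt hz2⟩
    have hlocal : IsLocalMax w y :=
      hymax.isLocalMax (mem_nhds_iff.2 ⟨_, hUA, hU, hyU⟩)
    -- contradiction with lap w y > 0
    have hlap : lap w y = s * lap ψ y + (-(c * r ^ (2 - ν))) * lap GE y + ε * lap qE y :=
      lap_comb3 (hψCD hy0) (contDiffAt_GE hy0) contDiffAt_qE s _ ε
    rw [hharm y hy0, lap_GE hy0, lap_qE] at hlap
    have hwCD : ContDiffAt ℝ 2 w y := by
      apply ContDiffAt.add
      apply ContDiffAt.add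
      · exact (contDiffAt_const).mul (hψCD hy0)
      · exact (contDiffAt_const).mul (contDiffAt_GE hy0)
      · exact (contDiffAt_const).mul contDiffAt_qE
    have := isLocalMax_lap_nonpos hwCD hlocal
    rw [hlap] at this
    simp at this
    nlinarith
  -- boundary values of w
  have hwy : w y ≤ c * R ^ (1 - ν) + ε * R ^ 2 := by
    have hy0 : y ≠ 0 := hne0 hyA
    have hsψ : ∀ {z : E3}, z ≠ 0 → s * ψ z ≤ c * ‖z‖ ^ (1 - ν) := by
      intro z hz
      have := hb1 z hz
      rcases hs with h1 | h1 <;> rw [h1] <;> cases abs_le.1 this <;> linarith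
    have hqy : qE y = ‖y‖ ^ 2 := qE_eq_norm_sq y
    have hGy : GE y = ‖y‖⁻¹ := GE_eq y
    rcases hbd with hyr | hyR
    · -- inner sphere
      have h1 : s * ψ y ≤ c * r ^ (1 - ν) := by
        have := hsψ hy0
        rwa [hyr] at this
      have h2 : (-(c * r ^ (2 - ν))) * GE y = -(c * r ^ (1 - ν)) := by
        rw [hGy, hyr]
        rw [show r⁻¹ = r ^ (-1 : ℝ) from (Real.rpow_neg_one r).symm]
        have hrr : r ^ (2 - ν) * r ^ (-1:ℝ) = r ^ (1 - ν) := by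
          rw [← Real.rpow_add hr]
          congr 1
          ring
        rw [neg_mul, mul_assoc, hrr]
      have h3 : ε * qE y ≤ ε * R ^ 2 := by
        rw [hqy, hyr]
        have h5 : r ^ 2 ≤ R ^ 2 := by nlinarith
        exact mul_le_mul_of_nonneg_left h5 (le_of_lt hεpos)
      have h4 : 0 ≤ c * R ^ (1 - ν) := mul_nonneg hc (Real.rpow_nonneg (le_of_lt hRpos) _)
      rw [hw]
      dsimp only
      rw [h2]
      linarith
    · -- outer sphere
      have h1 : s * ψ y ≤ c * R ^ (1 - ν) := by
        have := hsψ hy0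
        rwa [hyR] at this
      have h2 : (-(c * r ^ (2 - ν))) * GE y ≤ 0 := by
        rw [hGy]
        have hg : 0 ≤ ‖y‖⁻¹ := inv_nonneg.2 (norm_nonneg _)
        have : 0 ≤ c * r ^ (2 - ν) := mul_nonneg hc (Real.rpow_nonneg (le_of_lt hr) _)
        nlinarith
      have h3 : ε * qE y ≤ ε * R ^ 2 := by
        rw [hqy, hyR]
      rw [hw]
      dsimp only
      linarith
  -- conclude
  have hx₀w : w x₀ ≤ w y := hymax hAx₀
  have hGx₀ : GE x₀ = ‖x₀‖⁻¹ := GE_eq x₀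
  have hq0 : 0 ≤ qE x₀ := by rw [qE_eq_norm_sq]; positivity
  have hexp : w x₀ = s * ψ x₀ - c * r ^ (2 - ν) * ‖x₀‖⁻¹ + ε * qE x₀ := by
    rw [hw]; dsimp only; rw [hGx₀]; ring
  rw [hexp] at hx₀w
  have : s * ψ x₀ ≤ c * r ^ (2 - ν) * ‖x₀‖⁻¹ + c * R ^ (1 - ν) + η := by
    have hεq : 0 ≤ ε * qE x₀ := mul_nonneg (le_of_lt hεpos) hq0
    rw [← hεR]
    have t1 : s * ψ x₀ ≤ w y + c * r ^ (2 - ν) * ‖x₀‖⁻¹ - ε * qE x₀ := by linarith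
    have t2 : w y + c * r ^ (2 - ν) * ‖x₀‖⁻¹ - ε * qE x₀ ≤ c * R ^ (1 - ν) + ε * R ^ 2 + c * r ^ (2 - ν) * ‖x₀‖⁻¹ := by
      clear t1 hx₀w hexp
      clear_value w
      linarith
    linarith
  rw [div_eq_mul_inv]
  linarith

theorem aux_punctured_harmonic (ν c : ℝ) (hν : ν ∈ Set.Ioo (3 / 2 : ℝ) 2)
    (hc : 0 ≤ c) (ψ : E3 → ℝ) (hψ : ContDiffOn ℝ (⊤ : ℕ∞) ψ {(0 : E3)}ᶜ)
    (hharm : ∀ x : E3, x ≠ 0 → lap ψ x = 0)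
    (hb1 : ∀ x : E3, x ≠ 0 → |ψ x| ≤ c * ‖x‖ ^ (1 - ν)) :
    ∀ x : E3, x ≠ 0 → ψ x = 0 := by
  intro x₀ hx₀
  have hx₀pos : 0 < ‖x₀‖ := norm_pos_iff.2 hx₀
  have hν1 : (3/2 : ℝ) < ν := hν.1
  have hν2 : ν < 2 := hν.2
  have habs : ∀ {r R : ℝ}, 0 < r → r < ‖x₀‖ → ‖x₀‖ < R →
      |ψ x₀| ≤ c * r ^ (2 - ν) / ‖x₀‖ + c * R ^ (1 - ν) := by
    intro r R h1 h2 h3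
    have hp := annulus_estimate ν c hν hc ψ hψ hharm hb1 1 (Or.inl rfl) x₀ h1 h2 h3
    have hm := annulus_estimate ν c hν hc ψ hψ hharm hb1 (-1) (Or.inr rfl) x₀ h1 h2 h3
    rw [one_mul] at hp
    rw [neg_one_mul] at hm
    exact abs_le.2 ⟨by linarith, hp⟩
  suffices h : ∀ η : ℝ, 0 < η → |ψ x₀| ≤ η by
    by_contra hne
    have hpos : 0 < |ψ x₀| := abs_pos.2 hne
    linarith [h (|ψ x₀| / 2) (by linarith)]
  intro η hη
  -- choose R
  obtain ⟨R, hR1, hR2⟩ : ∃ R : ℝ, c * R ^ (1 - ν) < η / 2 ∧ ‖x₀‖ < R := by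
    have hT : Filter.Tendsto (fun R : ℝ => c * R ^ (1 - ν)) Filter.atTop (nhds 0) := by
      have h1 := (tendsto_rpow_neg_atTop (y := ν - 1) (by linarith)).const_mul c
      rw [mul_zero] at h1
      have : (fun R : ℝ => c * R ^ (-(ν - 1))) = fun R : ℝ => c * R ^ (1 - ν) := by
        funext R; congr 1; ring_nf
      rwa [this] at h1
    exact ((hT.eventually (gt_mem_nhds (by linarith : (0:ℝ) < η / 2))).and
      (Filter.eventually_gt_atTop ‖x₀‖)).exists
  -- choose r
  obtain ⟨r, hr1, hr2, hr3⟩ : ∃ r : ℝ, 0 < r ∧ r < ‖x₀‖ ∧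
      c * r ^ (2 - ν) / ‖x₀‖ < η / 2 := by
    have hcont : ContinuousAt (fun t : ℝ => t ^ (2 - ν)) 0 :=
      Real.continuousAt_rpow_const 0 (2 - ν) (Or.inr (by linarith))
    have h0 : (0:ℝ) ^ (2 - ν) = 0 := Real.zero_rpow (by linarith)
    have hT2 : Filter.Tendsto (fun t : ℝ => c * t ^ (2 - ν) / ‖x₀‖) (nhds 0) (nhds 0) := by
      have := ((hcont.tendsto).const_mul c).div_const ‖x₀‖
      rw [h0, mul_zero, zero_div] at this
      exact this
    have hev := hT2.eventually (gt_mem_nhds (by linarith : (0:ℝ) < η / 2))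
    rw [Metric.eventually_nhds_iff] at hev
    obtain ⟨δ, hδ, hδP⟩ := hev
    refine ⟨min (δ / 2) (‖x₀‖ / 2), by positivity, ?_, ?_⟩
    · calc min (δ / 2) (‖x₀‖ / 2) ≤ ‖x₀‖ / 2 := min_le_right _ _
        _ < ‖x₀‖ := by linarith
    · apply hδP
      rw [Real.dist_eq, sub_zero, abs_of_pos (by positivity)]
      calc min (δ / 2) (‖x₀‖ / 2) ≤ δ / 2 := min_le_left _ _
        _ < δ := by linarith
  have := habs hr1 hr2 hR2
  linarith

/-- a function harmonic on `ℝ³ ∖ {0}` satisfying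
`|ψ(x)| ≤ c‖x‖^{1−ν}` and `‖∇ψ(x)‖ ≤ c‖x‖^{−ν}` with `ν ∈ (3/2, 2)` vanishes
identically. -/
theorem punctured_harmonic_weighted_eq_zero (ν c : ℝ) (hν : ν ∈ Set.Ioo (3 / 2 : ℝ) 2)
    (hc : 0 ≤ c) (ψ : E3 → ℝ) (hψ : ContDiffOn ℝ (⊤ : ℕ∞) ψ {(0 : E3)}ᶜ)
    (hharm : ∀ x : E3, x ≠ 0 → lap ψ x = 0)
    (hb1 : ∀ x : E3, x ≠ 0 → |ψ x| ≤ c * ‖x‖ ^ (1 - ν))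
    (hb2 : ∀ x : E3, x ≠ 0 → ‖gradient ψ x‖ ≤ c * ‖x‖ ^ (-ν)) :
    ∀ x : E3, x ≠ 0 → ψ x = 0 :=
  aux_punctured_harmonic ν c hν hc ψ hψ hharm hb1
end
end
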